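/- arXiv:2312.17644 — 3 statements merged into one kernel-verified Lean document; each statement's English description precedes it below -/
import Mathlib

section
/- Let X₁ and X₂ be subshifts over countably infinite alphabets. Any conjugacy H : X₁^OTW → X₂^OTW (a length-preserving homeomorphism commuting with the shifts) maps X₁ bijectively onto X₂, and its restriction h : X₁ → X₂ is a homeomorphism for the product topologies satisfying h∘σ = σ∘h. In particular, if X₁^OTW and X₂^OTW are conjugate, then (X₁,σ) and (X₂,σ) are topologically conjugate with respect to the product topologies. -/
namespace SubshiftPaper

variable {A : Type*}

/-- The initial word of length `n` of a sequence. -/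
def word (x : ℕ → A) (n : ℕ) : List A := List.ofFn (fun i : Fin n => x i)

/-- Concatenation of a finite word with an infinite sequence. -/
def cat (α : List A) (x : ℕ → A) : ℕ → A := fun n =>
  if h : n < α.length then α.get ⟨n, h⟩ else x (n - α.length)

/-- The shift map on infinite sequences. -/
def shiftSeq (x : ℕ → A) : ℕ → A := fun n => x (n + 1)

/-- `X` is a subshift: the set of sequences avoiding a set `F` of forbidden nonempty
finite words. -/
def IsSubshift (X : Set (ℕ → A)) : Prop :=
  ∃ F : Set (List A), (∀ w ∈ F, w ≠ []) ∧
    X = {x : ℕ → A | ∀ n k : ℕ, word (fun i => x (n + i)) k ∉ F}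

/-- The language of `X`: all finite initial blocks of elements of `X` (and their
subblocks appear by shifting; for subshifts initial blocks suffice). -/
def language (X : Set (ℕ → A)) : Set (List A) :=
  {α | ∃ x ∈ X, word x α.length = α}

open Classical in
/-- The product metric `d(x,y) = 2^{-min{n : xₙ ≠ yₙ}}`. -/
noncomputable def prodDist (x y : ℕ → A) : ℝ :=
  if h : x = y then 0 else (2 : ℝ)⁻¹ ^ Nat.find (Function.ne_iff.mp h)

/-- The cylinder set `Z_α = {x ∈ X : x starts with α}`. -/
def cylinder (X : Set (ℕ → A)) (α : List A) : Set (ℕ → A) :=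
  {x ∈ X | word x α.length = α}

/-- The set `C(α,β) = {βx : βx ∈ X and αx ∈ X}`. -/
def Cab (X : Set (ℕ → A)) (α β : List A) : Set (ℕ → A) :=
  {y | ∃ x : ℕ → A, y = cat β x ∧ cat β x ∈ X ∧ cat α x ∈ X}

/-- The follower set `F_α = {x ∈ X : αx ∈ X}`. -/
def follower (X : Set (ℕ → A)) (α : List A) : Set (ℕ → A) :=
  {x ∈ X | cat α x ∈ X}

/-- The Boolean algebra `U` of subsets of `X` generated by the sets `C(α,β)`: the smallest
collection of subsets containing all `C(α,β)` and `X` and closed under finite unions, finite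
intersections and complements in `X`. -/
def BA (X : Set (ℕ → A)) : Set (Set (ℕ → A)) :=
  ⋂₀ {C : Set (Set (ℕ → A)) | X ∈ C ∧
    (∀ α ∈ language X, ∀ β ∈ language X, Cab X α β ∈ C) ∧
    (∀ S ∈ C, ∀ T ∈ C, S ∪ T ∈ C) ∧
    (∀ S ∈ C, ∀ T ∈ C, S ∩ T ∈ C) ∧
    (∀ S ∈ C, X \ S ∈ C)}

/-- The periodic sequence `γ^∞ = γγγ⋯`. -/
def per (γ : List A) (h : γ ≠ []) : ℕ → A :=
  fun n => γ.get ⟨n % γ.length, Nat.mod_lt n (List.length_pos_iff.mpr h)⟩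

/-- A point is eventually periodic if it has the form `αγ^∞`. -/
def EventuallyPeriodic (x : ℕ → A) : Prop :=
  ∃ (α γ : List A) (h : γ ≠ []), x = cat α (per γ h)

/-- Condition (L): for every finite `P ⊆ L_X` and every nonempty `γ ∈ L_X` with
`γ^∞ ∈ F_P := ⋂_{α ∈ P} F_α`, the set `F_P` contains an element other than `γ^∞`. -/
def ConditionL (X : Set (ℕ → A)) : Prop :=
  ∀ P : Finset (List A), ↑P ⊆ language X →
    ∀ γ ∈ language X, ∀ h : γ ≠ [],
      per γ h ∈ X ∩ ⋂ α ∈ P, follower X α →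
        ∃ z ∈ X ∩ ⋂ α ∈ P, follower X α, z ≠ per γ h


/-- The finite word `α` viewed as the element `α∞∞∞⋯` of `Σ_A`. -/
def finSeq (α : List A) : ℕ → Option A := fun n =>
  if h : n < α.length then some (α.get ⟨n, h⟩) else none

/-- An infinite sequence viewed as an element of `Σ_A`. -/
def infSeq (x : ℕ → A) : ℕ → Option A := fun n => some (x n)

/-- The OTW-subshift `X^OTW = X^inf ∪ X^fin` associated with a subshift `X`: `X^fin` is the
set of finite words `α` admitting infinitely many letters `a` with `αay ∈ X` for some `y`. -/
def otw (X : Set (ℕ → A)) : Set (ℕ → Option A) :=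
  (infSeq '' X) ∪
    {z | ∃ α : List A, z = finSeq α ∧
      {a : A | ∃ y : ℕ → A, cat (α ++ [a]) y ∈ X}.Infinite}

open Classical in
/-- The length of an element of `Σ_A`. -/
noncomputable def otwLength (z : ℕ → Option A) : ℕ∞ :=
  if h : ∃ n, z n = none then (Nat.find h : ℕ∞) else ⊤

/-- The shift map on `Σ_A` (it deletes the first symbol). -/
def shiftO (z : ℕ → Option A) : ℕ → Option A := fun n => z (n + 1)

/-- The generalized cylinder `Z(α, F)`. -/
def gencyl (α : List A) (F : Finset A) : Set (ℕ → Option A) :=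
  {z | (∀ i : Fin α.length, z i = some (α.get i)) ∧ ∀ a ∈ F, z α.length ≠ some a}

/-- The topology on `X^OTW` generated by the generalized cylinders `Z(α,F)`, `α ∈ L_X`,
`F ⊆ A` finite. -/
def otwTop (X : Set (ℕ → A)) : TopologicalSpace ↥(otw X) :=
  TopologicalSpace.generateFrom
    {S | ∃ α ∈ language X, ∃ F : Finset A, S = Subtype.val ⁻¹' gencyl α F}

/-- `H : X₁^OTW → X₂^OTW` is a conjugacy of OTW-subshifts: a homeomorphism (for the topologies
generated by the generalized cylinders) commuting with the shifts and preserving lengths. -/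
def IsOTWConjugacy {A₁ A₂ : Type*} (X₁ : Set (ℕ → A₁)) (X₂ : Set (ℕ → A₂))
    (H : ↥(otw X₁) ≃ ↥(otw X₂)) : Prop :=
  @Continuous _ _ (otwTop X₁) (otwTop X₂) H ∧
  @Continuous _ _ (otwTop X₂) (otwTop X₁) H.symm ∧
  (∀ z : ↥(otw X₁), otwLength (H z).1 = otwLength z.1) ∧
  (∀ z w : ↥(otw X₁), w.1 = shiftO z.1 → (H w).1 = shiftO (H z).1)

/-- The inclusion of `X` into `X^OTW`. -/
def infMem {A : Type*} {X : Set (ℕ → A)} (x : ↥X) : ↥(otw X) :=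
  ⟨infSeq x.1, Set.mem_union_left _ (Set.mem_image_of_mem _ x.2)⟩

/-- The product topology on `A^ℕ` for a discrete alphabet `A`. -/
def prodTop (A : Type*) : TopologicalSpace (ℕ → A) :=
  @Pi.topologicalSpace ℕ (fun _ => A) (fun _ => ⊥)

/-- The product topology restricted to a subshift `X ⊆ A^ℕ`. -/
def subTop {A : Type*} (X : Set (ℕ → A)) : TopologicalSpace ↥X :=
  TopologicalSpace.induced Subtype.val (prodTop A)


section Aux

variable {A : Type*} {X : Set (ℕ → A)}

lemma infSeq_inj : Function.Injective (infSeq (A := A)) := by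
  intro x y h
  funext n
  have := congrFun h n
  simpa [infSeq] using this

lemma length_word (x : ℕ → A) (k : ℕ) : (word x k).length = k := by simp [word]

lemma get_word (x : ℕ → A) (k : ℕ) (i : Fin (word x k).length) :
    (word x k).get i = x i := by
  rw [List.get_eq_getElem]
  show (List.ofFn fun j : Fin k => x j)[i.1]'(by simpa [word] using i.2) = x i
  simp

lemma word_mem_language {x : ℕ → A} (hx : x ∈ X) (k : ℕ) : word x k ∈ language X :=
  ⟨x, hx, by rw [length_word]⟩

lemma otwLength_infSeq (x : ℕ → A) : otwLength (infSeq x) = ⊤ := by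
  simp [otwLength, infSeq]

lemma mem_infPart {z : ℕ → Option A} (hz : z ∈ otw X) (h : otwLength z = ⊤) :
    ∃ x, x ∈ X ∧ infSeq x = z := by
  rcases hz with ⟨x, hx, hxe⟩ | ⟨β, hβ, -⟩
  · exact ⟨x, hx, hxe⟩
  · exfalso
    have hnone : ∃ n, z n = none := ⟨β.length, by simp [hβ, finSeq]⟩
    rw [otwLength, dif_pos hnone] at h
    exact (WithTop.natCast_ne_top _) h

lemma infSeq_shift (x : ℕ → A) : infSeq (shiftSeq x) = shiftO (infSeq x) := rfl

lemma isOpen_coordEq (n : ℕ) (a : A) :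
    @IsOpen _ (otwTop X) {w : ↥(otw X) | w.1 n = some a} := by
  letI := otwTop X
  rw [isOpen_iff_forall_mem_open]
  rintro w hw
  have hw' : w.1 n = some a := hw
  obtain ⟨x, hxX, hxw⟩ : ∃ x, x ∈ X ∧ ∀ i, i ≤ n → w.1 i = some (x i) := by
    rcases w.2 with ⟨x, hxX, hx⟩ | ⟨β, hβ, hβinf⟩
    · exact ⟨x, hxX, fun i _ => by rw [← hx]; rfl⟩
    · have hn : n < β.length := by
        by_contra hc
        rw [hβ] at hw'
        simp [finSeq, hc] at hw'
      obtain ⟨b, y, hy⟩ := hβinf.nonempty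
      refine ⟨cat (β ++ [b]) y, hy, fun i hi => ?_⟩
      have hi1 : i < β.length := lt_of_le_of_lt hi hn
      have hi2 : i < (β ++ [b]).length := by simp; omega
      rw [hβ]
      have hi3 : i < β.length + 1 := by omega
      simp [finSeq, cat, hi1, hi3, List.getElem_append_left]
  have hn1 : n < (word x (n+1)).length := by rw [length_word]; omega
  refine ⟨Subtype.val ⁻¹' gencyl (word x (n+1)) ∅, ?_, ?_, ?_⟩
  · rintro z ⟨hz1, -⟩
    have := hz1 ⟨n, hn1⟩
    simp only [get_word] at this
    have hxa : some (x n) = some a := by rw [← hxw n le_rfl]; exact hw'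
    show z.1 n = some a
    rw [this, hxa]
  · exact TopologicalSpace.GenerateOpen.basic _
      ⟨word x (n+1), word_mem_language hxX _, ∅, rfl⟩
  · refine ⟨fun i => ?_, by simp⟩
    have hile : (i : ℕ) ≤ n :=
      Nat.lt_succ_iff.mp (lt_of_lt_of_eq i.2 (length_word x (n+1)))
    rw [get_word, hxw i hile]

lemma continuous_infMem :
    @Continuous _ _ (subTop X) (otwTop X) (infMem (X := X)) := by
  letI := subTop X
  letI := otwTop X
  letI : TopologicalSpace A := ⊥
  haveI : DiscreteTopology A := ⟨rfl⟩
  rw [show otwTop X = TopologicalSpace.generateFrom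
    {S | ∃ α ∈ language X, ∃ F : Finset A, S = Subtype.val ⁻¹' gencyl α F} from rfl,
    continuous_generateFrom_iff]
  rintro S ⟨α, hα, F, rfl⟩
  have hkey : (infMem (X := X)) ⁻¹' (Subtype.val ⁻¹' gencyl α F) =
      Subtype.val ⁻¹' ((⋂ i : Fin α.length, (fun x : ℕ → A => x i) ⁻¹' {α.get i}) ∩
        ((fun x : ℕ → A => x α.length) ⁻¹' {a | a ∈ F}ᶜ)) := by
    ext x
    simp only [Set.mem_preimage, gencyl, Set.mem_setOf_eq, Set.mem_inter_iff,
      Set.mem_iInter, Set.mem_compl_iff, infMem, infSeq]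
    constructor
    · rintro ⟨h1, h2⟩
      refine ⟨fun i => Option.some.inj (h1 i), fun hmem => h2 _ hmem rfl⟩
    · rintro ⟨h1, h2⟩
      exact ⟨fun i => by rw [h1 i], fun a ha hc => h2 (by rw [Option.some.inj hc]; exact ha)⟩
  rw [hkey]
  apply isOpen_induced
  refine IsOpen.inter ?_ ?_
  · exact isOpen_iInter_of_finite fun i : Fin α.length =>
      (continuous_apply (i : ℕ)).isOpen_preimage _ (isOpen_discrete _)
  · exact (continuous_apply α.length).isOpen_preimage _ (isOpen_discrete _)

lemma cont_aux {A₁ A₂ : Type*} {X₁ : Set (ℕ → A₁)} {X₂ : Set (ℕ → A₂)}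
    (K : ↥(otw X₁) → ↥(otw X₂)) (hK : @Continuous _ _ (otwTop X₁) (otwTop X₂) K)
    (h : ↥X₁ → ↥X₂) (hh : ∀ x, (K (infMem x)).1 = infSeq (h x).1) :
    @Continuous _ _ (subTop X₁) (subTop X₂) h := by
  letI := subTop X₁
  letI : TopologicalSpace A₂ := ⊥
  haveI : DiscreteTopology A₂ := ⟨rfl⟩
  letI := otwTop X₁
  letI := otwTop X₂
  rw [show subTop X₂ = TopologicalSpace.induced Subtype.val (prodTop A₂) from rfl,
    continuous_induced_rng]
  have : (Subtype.val ∘ h) = fun x => (h x).1 := rfl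
  rw [this]
  rw [show prodTop A₂ = (Pi.topologicalSpace :
    TopologicalSpace (ℕ → A₂)) from rfl, continuous_pi_iff]
  intro n
  rw [continuous_discrete_rng]
  intro a
  have hset : (fun x : ↥X₁ => (h x).1 n) ⁻¹' {a} =
      infMem ⁻¹' (K ⁻¹' {w : ↥(otw X₂) | w.1 n = some a}) := by
    ext x
    simp only [Set.mem_preimage, Set.mem_singleton_iff, Set.mem_setOf_eq, hh x, infSeq]
    exact ⟨fun h' => by rw [h'], fun h' => Option.some.inj h'⟩
  rw [hset]
  exact continuous_infMem.isOpen_preimage _ (hK.isOpen_preimage _ (isOpen_coordEq n a))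

end Aux

/-- a conjugacy `H : X₁^OTW → X₂^OTW` of OTW-subshifts over countably infinite
alphabets maps `X₁` bijectively onto `X₂`, and its restriction `h : X₁ → X₂` is a
homeomorphism for the product topologies satisfying `h ∘ σ = σ ∘ h`. -/
theorem stmt1 {A₁ A₂ : Type*} [Countable A₁] [Infinite A₁] [Countable A₂] [Infinite A₂]
    (X₁ : Set (ℕ → A₁)) (X₂ : Set (ℕ → A₂)) (hX₁ : IsSubshift X₁) (hX₂ : IsSubshift X₂)
    (H : ↥(otw X₁) ≃ ↥(otw X₂)) (hH : IsOTWConjugacy X₁ X₂ H) :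
    ∃ h : ↥X₁ ≃ ↥X₂,
      (∀ x : ↥X₁, (H (infMem x)).1 = infSeq (h x).1) ∧
      @Continuous _ _ (subTop X₁) (subTop X₂) h ∧
      @Continuous _ _ (subTop X₂) (subTop X₁) h.symm ∧
      (∀ x y : ↥X₁, y.1 = shiftSeq x.1 → (h y).1 = shiftSeq (h x).1) := by
  have len := hH.2.2.1
  have hsh := hH.2.2.2
  have hfwd : ∀ x : ↥X₁, ∃ y, y ∈ X₂ ∧ infSeq y = (H (infMem x)).1 := by
    intro x
    refine mem_infPart (H (infMem x)).2 ?_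
    rw [len]
    exact otwLength_infSeq _
  have hbwd : ∀ y : ↥X₂, ∃ x, x ∈ X₁ ∧ infSeq x = (H.symm (infMem y)).1 := by
    intro y
    refine mem_infPart (H.symm (infMem y)).2 ?_
    have h2 := len (H.symm (infMem y))
    rw [Equiv.apply_symm_apply] at h2
    rw [← h2]
    exact otwLength_infSeq _
  choose f hf1 hf2 using hfwd
  choose g hg1 hg2 using hbwd
  refine ⟨⟨fun x => ⟨f x, hf1 x⟩, fun y => ⟨g y, hg1 y⟩, ?_, ?_⟩, ?_, ?_, ?_, ?_⟩
  · intro x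
    apply Subtype.ext
    apply infSeq_inj
    rw [hg2 ⟨f x, hf1 x⟩]
    have he : infMem (⟨f x, hf1 x⟩ : ↥X₂) = H (infMem x) := Subtype.ext (hf2 x)
    rw [he, Equiv.symm_apply_apply]
    rfl
  · intro y
    apply Subtype.ext
    apply infSeq_inj
    rw [hf2 ⟨g y, hg1 y⟩]
    have he : infMem (⟨g y, hg1 y⟩ : ↥X₁) = H.symm (infMem y) := Subtype.ext (hg2 y)
    rw [he, Equiv.apply_symm_apply]
    rfl
  · intro x
    exact (hf2 x).symm
  · exact cont_aux H hH.1 _ fun x => (hf2 x).symm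
  · exact cont_aux H.symm hH.2.1 _ fun y => (hg2 y).symm
  · intro x y hxy
    have hO : (infMem y).1 = shiftO (infMem x).1 := by
      show infSeq y.1 = shiftO (infSeq x.1)
      rw [hxy, infSeq_shift]
    have := hsh (infMem x) (infMem y) hO
    rw [← hf2 x, ← hf2 y] at this
    apply infSeq_inj
    show infSeq (f y) = infSeq (shiftSeq (f x))
    rw [infSeq_shift, this]


end SubshiftPaper
end

section
/- Let X₁ and X₂ be subshifts over countable alphabets A₁ and A₂, let h : X₁ → X₂ be a bijection that is isometric for the product metrics, and let α ∈ L_{X₁} and β ∈ L_{X₂} be words with |β| = |α| and h(Z_α) = Z_β. If the set {a ∈ A₁ : αa ∈ L_{X₁}} is infinite, then the set {b ∈ A₂ : βb ∈ L_{X₂}} is infinite. -/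
namespace SubshiftPaper

variable {A : Type*}

lemma word_succ (x : ℕ → A) (n : ℕ) : word x (n + 1) = word x n ++ [x n] := by
  rw [word, List.ofFn_succ', List.concat_eq_append]; rfl

lemma word_eq_iff (x y : ℕ → A) (n : ℕ) :
    word x n = word y n ↔ ∀ i < n, x i = y i := by
  simp only [word, List.ofFn_inj, funext_iff]
  constructor
  · intro hxy i hi; exact hxy ⟨i, hi⟩
  · intro hxy i; exact hxy i i.2

lemma prodDist_eq_of (x y : ℕ → A) (n : ℕ) (hagree : ∀ m < n, x m = y m)
    (hne : x n ≠ y n) : prodDist x y = (2 : ℝ)⁻¹ ^ n := by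
  classical
  have hxy : x ≠ y := fun hh => hne (by rw [hh])
  rw [prodDist, dif_neg hxy]
  congr 1
  rw [Nat.find_eq_iff]
  exact ⟨hne, fun m hm hmne => hmne (hagree m hm)⟩

/-- if `h : X₁ → X₂` is an isometric bijection of subshifts, `α ∈ L_{X₁}`,
`β ∈ L_{X₂}`, `|β| = |α|` and `h(Z_α) = Z_β`, and if `α` can be extended in the language by
infinitely many letters, then so can `β`. -/
theorem stmt3 {A₁ A₂ : Type*} [Countable A₁] [Countable A₂]
    (X₁ : Set (ℕ → A₁)) (X₂ : Set (ℕ → A₂)) (hX₁ : IsSubshift X₁) (hX₂ : IsSubshift X₂)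
    (h : ↥X₁ ≃ ↥X₂)
    (hiso : ∀ x y : ↥X₁, prodDist (h x).1 (h y).1 = prodDist x.1 y.1)
    (α : List A₁) (hα : α ∈ language X₁) (β : List A₂) (hβ : β ∈ language X₂)
    (hlen : β.length = α.length)
    (him : Subtype.val '' (⇑h '' (Subtype.val ⁻¹' cylinder X₁ α)) = cylinder X₂ β)
    (hinf : {a : A₁ | α ++ [a] ∈ language X₁}.Infinite) :
    {b : A₂ | β ++ [b] ∈ language X₂}.Infinite := by
  classical
  set S := {a : A₁ | α ++ [a] ∈ language X₁} with hS
  have hch : ∀ a ∈ S, ∃ x, x ∈ X₁ ∧ word x (α.length + 1) = α ++ [a] := by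
    intro a ha
    obtain ⟨x, hx, hw⟩ := ha
    exact ⟨x, hx, by simpa using hw⟩
  choose! xa hxaX hxaw using hch
  -- facts about xa
  have hword : ∀ a ∈ S, word (xa a) α.length = α ∧ xa a α.length = a := by
    intro a ha
    have := hxaw a ha
    rw [word_succ] at this
    have hl : (word (xa a) α.length).length = α.length := by simp [word]
    obtain ⟨h1, h2⟩ := List.append_inj this hl
    exact ⟨h1, by simpa using h2⟩
  have hcyl : ∀ a ∈ S, xa a ∈ cylinder X₁ α := fun a ha =>
    ⟨hxaX a ha, (hword a ha).1⟩
  -- images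
  have hy : ∀ a, ∀ ha : a ∈ S, ((h ⟨xa a, hxaX a ha⟩ : ↥X₂) : ℕ → A₂) ∈ cylinder X₂ β := by
    intro a ha
    rw [← him]
    exact ⟨h ⟨xa a, hxaX a ha⟩, ⟨⟨xa a, hxaX a ha⟩, hcyl a ha, rfl⟩, rfl⟩
  obtain ⟨x₂, hx₂, -⟩ := hβ
  haveI : Nonempty A₂ := ⟨x₂ 0⟩
  set f : A₁ → A₂ := fun a =>
    if ha : a ∈ S then ((h ⟨xa a, hxaX a ha⟩ : ↥X₂) : ℕ → A₂) β.length
    else Classical.arbitrary _ with hf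
  have hmaps : ∀ a ∈ S, f a ∈ {b : A₂ | β ++ [b] ∈ language X₂} := by
    intro a ha
    obtain ⟨hyX, hyw⟩ := hy a ha
    refine ⟨(h ⟨xa a, hxaX a ha⟩ : ↥X₂), hyX, ?_⟩
    have : (β ++ [f a]).length = β.length + 1 := by simp
    rw [this, word_succ, hyw, hf]
    simp [ha]
  have hinj : Set.InjOn f S := by
    intro a ha a' ha' hfeq
    by_contra hne
    have hxne : xa a α.length ≠ xa a' α.length := by
      rw [(hword a ha).2, (hword a' ha').2]; exact hne
    have hagree : ∀ m < α.length, xa a m = xa a' m := by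
      have := (word_eq_iff (xa a) (xa a') α.length).mp
        (((hword a ha).1).trans ((hword a' ha').1).symm)
      exact this
    have hd1 : prodDist (xa a) (xa a') = (2 : ℝ)⁻¹ ^ α.length :=
      prodDist_eq_of _ _ _ hagree hxne
    have hd2 : prodDist ((h ⟨xa a, hxaX a ha⟩ : ↥X₂) : ℕ → A₂)
        ((h ⟨xa a', hxaX a' ha'⟩ : ↥X₂) : ℕ → A₂) = (2 : ℝ)⁻¹ ^ α.length := by
      rw [hiso]; exact hd1
    -- images differ at position β.length
    set ya := ((h ⟨xa a, hxaX a ha⟩ : ↥X₂) : ℕ → A₂)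
    set yb := ((h ⟨xa a', hxaX a' ha'⟩ : ↥X₂) : ℕ → A₂)
    have hyne : ya ≠ yb := by
      intro hh
      rw [prodDist, dif_pos hh] at hd2
      have : (0 : ℝ) < (2 : ℝ)⁻¹ ^ α.length := by positivity
      linarith [hd2]
    classical
    rw [prodDist, dif_neg hyne] at hd2
    have hfind : Nat.find (Function.ne_iff.mp hyne) = α.length := by
      have h2 : ((2 : ℝ)⁻¹) < 1 := by norm_num
      have h0 : (0 : ℝ) < (2 : ℝ)⁻¹ := by norm_num
      exact pow_right_injective₀ h0 (ne_of_lt h2) hd2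
    have := Nat.find_spec (Function.ne_iff.mp hyne)
    rw [hfind, ← hlen] at this
    apply this
    have h1 : f a = ya β.length := by simp [hf, ha]; rfl
    have h2 : f a' = yb β.length := by simp [hf, ha']; rfl
    rw [← h1, ← h2, hfeq]
  exact ((hinf.image hinj).mono (Set.image_subset_iff.mpr hmaps))


end SubshiftPaper
end

section
/- Let X be a subshift over an arbitrary alphabet. Then X satisfies condition (L) if and only if {x} ∉ U for every eventually periodic point x ∈ X. -/
namespace SubshiftPaper

variable {A : Type*}

/-! ### auxiliary lemmas -/


def shifts (b : ℕ) (x : ℕ → A) : ℕ → A := fun n => x (n + b)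

lemma shifts_zero (x : ℕ → A) : shifts 0 x = x := rfl

lemma word_length (x : ℕ → A) (n : ℕ) : (word x n).length = n := List.length_ofFn

lemma word_getElem (x : ℕ → A) (n i : ℕ) (h : i < (word x n).length) :
    (word x n)[i] = x i := by simp [word]

lemma cat_apply_lt (α : List A) (x : ℕ → A) {n : ℕ} (h : n < α.length) :
    cat α x n = α[n] := by simp [cat, h]

lemma cat_apply_ge (α : List A) (x : ℕ → A) {n : ℕ} (h : α.length ≤ n) :
    cat α x n = x (n - α.length) := by
  simp [cat, Nat.not_lt.mpr h]

lemma cat_nil (x : ℕ → A) : cat ([] : List A) x = x := by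
  funext n; simp [cat]

lemma cat_append (α β : List A) (x : ℕ → A) : cat (α ++ β) x = cat α (cat β x) := by
  funext n
  rcases lt_or_ge n α.length with h | h
  · rw [cat_apply_lt _ _ (by simp; omega), cat_apply_lt _ _ h,
      List.getElem_append_left h]
  · rw [cat_apply_ge _ _ h]
    rcases lt_or_ge n (α.length + β.length) with h2 | h2
    · rw [cat_apply_lt _ _ (by simp; omega), cat_apply_lt _ _ (by omega),
        List.getElem_append_right h]
    · rw [cat_apply_ge _ _ (by simp; omega), cat_apply_ge _ _ (by omega)]
      congr 1; simp; omega

lemma word_eq_of_agree {x y : ℕ → A} {n : ℕ} (h : ∀ i < n, x i = y i) :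
    word x n = word y n := by
  apply List.ext_getElem (by simp [word_length])
  intro i h1 h2
  rw [word_getElem, word_getElem]
  exact h i (by simpa [word_length] using h1)

lemma word_cat (β : List A) (v : ℕ → A) : word (cat β v) β.length = β := by
  apply List.ext_getElem (by simp [word_length])
  intro i h1 h2
  rw [word_getElem]
  exact cat_apply_lt _ _ h2

lemma cat_word_shifts (x : ℕ → A) (n : ℕ) : cat (word x n) (shifts n x) = x := by
  funext i
  rcases lt_or_ge i n with h | h
  · rw [cat_apply_lt _ _ (by simpa [word_length] using h), word_getElem]
  · rw [cat_apply_ge _ _ (by simpa [word_length] using h)]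
    simp [shifts, word_length]; congr 1; omega

lemma shifts_cat (μ : List A) (w : ℕ → A) {b : ℕ} (h : b ≤ μ.length) :
    shifts b (cat μ w) = cat (μ.drop b) w := by
  funext n
  rcases lt_or_ge (n + b) μ.length with h2 | h2
  · show cat μ w (n + b) = _
    rw [cat_apply_lt _ _ h2, cat_apply_lt _ _ (by simp; omega)]
    rw [List.getElem_drop]
    congr 1; omega
  · show cat μ w (n + b) = _
    rw [cat_apply_ge _ _ h2, cat_apply_ge _ _ (by simp; omega)]
    congr 1; simp; omega

lemma shifts_full_cat (μ : List A) (w : ℕ → A) : shifts μ.length (cat μ w) = w := by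
  rw [shifts_cat μ w le_rfl, List.drop_length, cat_nil]

lemma shifts_add_cat (μ : List A) (w : ℕ → A) (r : ℕ) :
    shifts (μ.length + r) (cat μ w) = shifts r w := by
  funext n
  show cat μ w (n + (μ.length + r)) = w (n + r)
  rw [cat_apply_ge _ _ (by omega)]
  congr 1; omega

lemma per_mod (γ : List A) (h : γ ≠ []) (n : ℕ) :
    per γ h n = γ[n % γ.length]'(Nat.mod_lt n (List.length_pos_iff.mpr h)) := rfl

lemma word_per (γ : List A) (h : γ ≠ []) : word (per γ h) γ.length = γ := by
  apply List.ext_getElem (by simp [word_length])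
  intro i h1 h2
  rw [word_getElem, per_mod]
  congr 1; exact Nat.mod_eq_of_lt h2

lemma shifts_per (γ : List A) (h : γ ≠ []) (q : ℕ) :
    shifts (γ.length * q) (per γ h) = per γ h := by
  funext n
  show per γ h (n + γ.length * q) = per γ h n
  rw [per_mod, per_mod]
  congr 1
  exact Nat.add_mul_mod_self_left n γ.length q

section Subshift

variable {F : Set (List A)} {X : Set (ℕ → A)}
  (hXF : X = {x : ℕ → A | ∀ n k : ℕ, word (fun i => x (n + i)) k ∉ F})

include hXF

lemma memX_shifts {x : ℕ → A} (hx : x ∈ X) (b : ℕ) : shifts b x ∈ X := by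
  rw [hXF] at hx ⊢
  intro n k
  have := hx (n + b) k
  convert this using 2
  apply word_eq_of_agree
  intro i _
  show x (n + i + b) = x (n + b + i)
  congr 1; omega

lemma notX_witness {u : ℕ → A} (hu : u ∉ X) :
    ∃ n k, word (fun i => u (n + i)) k ∈ F := by
  rw [hXF] at hu
  simp only [Set.mem_setOf_eq, not_forall, not_not] at hu
  exact hu

lemma notX_of_agree {u v : ℕ → A} {n k : ℕ}
    (hw : word (fun i => u (n + i)) k ∈ F) (hagree : ∀ i < n + k, v i = u i) :
    v ∉ X := by
  rw [hXF]
  intro hv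
  refine hv n k ?_
  rw [word_eq_of_agree (x := fun i => v (n + i)) (y := fun i => u (n + i))
    (fun i hi => hagree (n + i) (by omega))]
  exact hw

end Subshift

lemma mem_cab_iff (X : Set (ℕ → A)) (α β : List A) (u : ℕ → A) :
    u ∈ Cab X α β ↔ u ∈ X ∧ word u β.length = β ∧ cat α (shifts β.length u) ∈ X := by
  constructor
  · rintro ⟨v, rfl, h1, h2⟩
    refine ⟨h1, word_cat _ _, ?_⟩
    have : shifts β.length (cat β v) = v := by
      funext n
      show cat β v (n + β.length) = v n
      rw [cat_apply_ge _ _ (by omega)]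
      congr 1; omega
    rw [this]; exact h2
  · rintro ⟨h1, h2, h3⟩
    refine ⟨shifts β.length u, ?_, ?_, h3⟩
    · conv_lhs => rw [← cat_word_shifts u β.length, h2]
    · rw [show cat β (shifts β.length u) = u by conv_rhs => rw [← cat_word_shifts u β.length, h2]]
      exact h1

lemma cab_nil (X : Set (ℕ → A)) (α : List A) : Cab X α [] = follower X α := by
  ext u
  constructor
  · rintro ⟨v, rfl, h1, h2⟩
    rw [cat_nil] at *
    exact ⟨h1, h2⟩
  · rintro ⟨h1, h2⟩
    exact ⟨u, (cat_nil u).symm, by rwa [cat_nil], h2⟩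

/-! ### the invariant -/

def pt (x : ℕ → A) (m : ℕ) (z : ℕ → A) : ℕ → A := cat (word x m) z

lemma pt_apply_lt {x z : ℕ → A} {m i : ℕ} (h : i < m) : pt x m z i = x i := by
  rw [pt, cat_apply_lt _ _ (by rw [word_length]; exact h), word_getElem]

def Hyp (X : Set (ℕ → A)) (x : ℕ → A) (Q : Finset (List A × ℕ)) (m : ℕ) (z : ℕ → A) : Prop :=
  ∀ p ∈ Q, p.2 ≤ m → cat p.1 (shifts p.2 x) ∈ X → cat p.1 (shifts p.2 (pt x m z)) ∈ X

def Inv (X : Set (ℕ → A)) (x : ℕ → A) (S : Set (ℕ → A)) : Prop :=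
  ∃ (M : ℕ) (Q : Finset (List A × ℕ)),
    ∀ m, M ≤ m → ∀ z, Hyp X x Q m z → (x ∈ S ↔ pt x m z ∈ S)

lemma hyp_mono {X : Set (ℕ → A)} {x : ℕ → A} {Q Q' : Finset (List A × ℕ)} {m : ℕ} {z : ℕ → A}
    (hQ : Q ⊆ Q') (h : Hyp X x Q' m z) : Hyp X x Q m z :=
  fun p hp => h p (hQ hp)

lemma hyp_ptX {X : Set (ℕ → A)} {x : ℕ → A} {Q : Finset (List A × ℕ)} {m : ℕ} {z : ℕ → A}
    (hmem : (([] : List A), 0) ∈ Q) (h : Hyp X x Q m z) (hx : x ∈ X) : pt x m z ∈ X := by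
  have := h (([] : List A), 0) hmem (Nat.zero_le m)
  rw [cat_nil, cat_nil, shifts_zero, shifts_zero] at this
  exact this hx

lemma inv_BA {F : Set (List A)} {X : Set (ℕ → A)}
    (hXF : X = {x : ℕ → A | ∀ n k : ℕ, word (fun i => x (n + i)) k ∉ F})
    {x : ℕ → A} (hx : x ∈ X) {S : Set (ℕ → A)} (hS : S ∈ BA X) : Inv X x S := by
  classical
  refine Set.mem_sInter.mp hS {S | Inv X x S} ⟨?_, ?_, ?_, ?_, ?_⟩
  · -- X itself
    refine ⟨0, {(([] : List A), 0)}, fun m hm z hz => ?_⟩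
    exact iff_of_true hx (hyp_ptX (Finset.mem_singleton_self _) hz hx)
  · -- generators
    intro α _ β _
    by_cases hpre : word x β.length = β
    · by_cases hpos : cat α (shifts β.length x) ∈ X
      · refine ⟨β.length, {(([] : List A), 0), (α, β.length)}, fun m hm z hz => ?_⟩
        have hptX : pt x m z ∈ X := hyp_ptX (by simp) hz hx
        have h3 : cat α (shifts β.length (pt x m z)) ∈ X :=
          hz (α, β.length) (by simp) hm hpos
        have hpre' : word (pt x m z) β.length = β := by
          rw [word_eq_of_agree (x := pt x m z) (y := x)
            (fun i hi => pt_apply_lt (lt_of_lt_of_le hi hm))]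
          exact hpre
        rw [mem_cab_iff, mem_cab_iff]
        exact iff_of_true ⟨hx, hpre, hpos⟩ ⟨hptX, hpre', h3⟩
      · obtain ⟨n, k, hw⟩ := notX_witness hXF hpos
        refine ⟨β.length + n + k, ∅, fun m hm z hz => ?_⟩
        rw [mem_cab_iff, mem_cab_iff]
        refine iff_of_false (fun h => hpos h.2.2) ?_
        rintro ⟨-, -, h3⟩
        refine notX_of_agree hXF hw ?_ h3
        intro i hi
        rcases lt_or_ge i α.length with h4 | h4
        · rw [cat_apply_lt _ _ h4, cat_apply_lt _ _ h4]
        · rw [cat_apply_ge _ _ h4, cat_apply_ge _ _ h4]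
          show pt x m z (i - α.length + β.length) = x (i - α.length + β.length)
          exact pt_apply_lt (by omega)
    · refine ⟨β.length, ∅, fun m hm z hz => ?_⟩
      rw [mem_cab_iff, mem_cab_iff]
      refine iff_of_false (fun h => hpre h.2.1) ?_
      rintro ⟨-, h2, -⟩
      exact hpre ((word_eq_of_agree (x := x) (y := pt x m z)
        (fun i hi => (pt_apply_lt (lt_of_lt_of_le hi hm)).symm)).trans h2)
  · -- union
    rintro S ⟨M1, Q1, h1⟩ T ⟨M2, Q2, h2⟩
    refine ⟨max M1 M2, Q1 ∪ Q2, fun m hm z hz => ?_⟩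
    have e1 := h1 m (le_trans (le_max_left _ _) hm) z (hyp_mono Finset.subset_union_left hz)
    have e2 := h2 m (le_trans (le_max_right _ _) hm) z (hyp_mono Finset.subset_union_right hz)
    rw [Set.mem_union, Set.mem_union]
    exact or_congr e1 e2
  · -- intersection
    rintro S ⟨M1, Q1, h1⟩ T ⟨M2, Q2, h2⟩
    refine ⟨max M1 M2, Q1 ∪ Q2, fun m hm z hz => ?_⟩
    have e1 := h1 m (le_trans (le_max_left _ _) hm) z (hyp_mono Finset.subset_union_left hz)
    have e2 := h2 m (le_trans (le_max_right _ _) hm) z (hyp_mono Finset.subset_union_right hz)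
    rw [Set.mem_inter_iff, Set.mem_inter_iff]
    exact and_congr e1 e2
  · -- complement
    rintro S ⟨M, Q, h⟩
    refine ⟨M, insert (([] : List A), 0) Q, fun m hm z hz => ?_⟩
    have e := h m hm z (hyp_mono (Finset.subset_insert _ _) hz)
    have hptX : pt x m z ∈ X := hyp_ptX (Finset.mem_insert_self _ _) hz hx
    rw [Set.mem_diff, Set.mem_diff]
    exact and_congr (iff_of_true hx hptX) (not_congr e)

/-! ### realizability via condition (L) -/

lemma exists_pt {F : Set (List A)} {X : Set (ℕ → A)}
    (hXF : X = {x : ℕ → A | ∀ n k : ℕ, word (fun i => x (n + i)) k ∉ F})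
    (hL : ConditionL X) {x : ℕ → A} (hx : x ∈ X) (hep : EventuallyPeriodic x)
    (M : ℕ) (Q : Finset (List A × ℕ)) :
    ∃ m, M ≤ m ∧ ∃ z, Hyp X x Q m z ∧ pt x m z ≠ x := by
  classical
  obtain ⟨α₀, γ, hγ, hxeq⟩ := hep
  have hLen : 1 ≤ γ.length := List.length_pos_iff.mpr hγ
  set m := α₀.length + γ.length * M with hmdef
  have hMm : M ≤ m := le_trans (Nat.le_mul_of_pos_left M hLen) (Nat.le_add_left _ _)
  have hy : shifts m (cat α₀ (per γ hγ)) = per γ hγ := by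
    rw [hmdef, shifts_add_cat, shifts_per]
  rw [← hxeq] at hy
  set μ := word x m with hμdef
  have hμlen : μ.length = m := word_length _ _
  have hrec : cat μ (per γ hγ) = x := by
    rw [← hy, hμdef]; exact cat_word_shifts x m
  have hperX : per γ hγ ∈ X := by rw [← hy]; exact memX_shifts hXF hx m
  have key : ∀ b ≤ m, ∀ α : List A,
      cat (α ++ μ.drop b) (per γ hγ) = cat α (shifts b x) := by
    intro b hb α
    rw [cat_append]
    rw [show shifts b x = shifts b (cat μ (per γ hγ)) by rw [hrec],
      shifts_cat μ _ (by omega)]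
  set P : Finset (List A) :=
    (Q.filter (fun p => p.2 ≤ m ∧ cat p.1 (shifts p.2 x) ∈ X)).image
      (fun p => p.1 ++ μ.drop p.2) with hPdef
  have hPspec : ∀ π ∈ P, cat π (per γ hγ) ∈ X := by
    intro π hπ
    rw [hPdef] at hπ
    obtain ⟨p, hp, rfl⟩ := Finset.mem_image.mp hπ
    obtain ⟨-, hb, hmemX⟩ := Finset.mem_filter.mp hp
    rw [key p.2 hb p.1]
    exact hmemX
  have hPlang : ↑P ⊆ language X := by
    intro π hπ
    exact ⟨cat π (per γ hγ), hPspec π hπ, word_cat _ _⟩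
  have hγlang : γ ∈ language X := ⟨per γ hγ, hperX, word_per γ hγ⟩
  have hFP : per γ hγ ∈ X ∩ ⋂ α ∈ P, follower X α := by
    refine ⟨hperX, Set.mem_iInter₂.mpr fun π hπ => ⟨hperX, hPspec π hπ⟩⟩
  obtain ⟨z, ⟨hzX, hzF⟩, hzne⟩ := hL P hPlang γ hγlang hγ hFP
  refine ⟨m, hMm, z, ?_, ?_⟩
  · intro p hp hb hmemX
    have hπ : p.1 ++ μ.drop p.2 ∈ P := by
      rw [hPdef]
      exact Finset.mem_image.mpr ⟨p, Finset.mem_filter.mpr ⟨hp, hb, hmemX⟩, rfl⟩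
    have hzf := Set.mem_iInter₂.mp hzF _ hπ
    have : shifts p.2 (pt x m z) = cat (μ.drop p.2) z := by
      rw [pt, ← hμdef]
      exact shifts_cat μ z (by omega)
    rw [this, ← cat_append]
    exact hzf.2
  · intro hcontra
    apply hzne
    have hzrec : shifts m (pt x m z) = z := by
      rw [pt, ← hμdef, ← hμlen]
      exact shifts_full_cat μ z
    rw [← hzrec, hcontra, hy]

/-! ### membership lemmas for backward direction -/

lemma X_mem_BA (X : Set (ℕ → A)) : X ∈ BA X := fun _ hC => hC.1

lemma cab_mem_BA (X : Set (ℕ → A)) {α β : List A} (hα : α ∈ language X)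
    (hβ : β ∈ language X) : Cab X α β ∈ BA X := fun _ hC => hC.2.1 α hα β hβ

lemma inter_mem_BA (X : Set (ℕ → A)) {S T : Set (ℕ → A)} (hS : S ∈ BA X) (hT : T ∈ BA X) :
    S ∩ T ∈ BA X := fun C hC => hC.2.2.2.1 S (hS C hC) T (hT C hC)

lemma FP_mem_BA (X : Set (ℕ → A)) (hnil : ([] : List A) ∈ language X)
    (P : Finset (List A)) (hP : ↑P ⊆ language X) :
    X ∩ ⋂ α ∈ P, follower X α ∈ BA X := by
  classical
  induction P using Finset.induction with
  | empty => simpa using X_mem_BA X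
  | insert a P' hni ih =>
    have ha : a ∈ language X := hP (by simp)
    have hP' : ↑P' ⊆ language X := fun b hb => hP (by simp [hb])
    have heq : X ∩ ⋂ α ∈ insert a P', follower X α
        = Cab X a [] ∩ (X ∩ ⋂ α ∈ P', follower X α) := by
      rw [cab_nil]
      ext u
      simp only [Set.mem_inter_iff, Set.mem_iInter, Finset.mem_insert, follower,
        Set.mem_setOf_eq]
      constructor
      · rintro ⟨h1, h2⟩
        exact ⟨h2 a (Or.inl rfl), h1, fun α hα => h2 α (Or.inr hα)⟩
      · rintro ⟨h0, h1, h2⟩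
        exact ⟨h1, fun α hα => hα.elim (fun h => h ▸ h0) (h2 α)⟩
    rw [heq]
    exact inter_mem_BA X (cab_mem_BA X ha hnil) (ih hP')


/-- a subshift `X` satisfies condition (L) if and only if `{x} ∉ U` for every
eventually periodic point `x ∈ X`. -/
theorem stmt4 {A : Type*} (X : Set (ℕ → A)) (hX : IsSubshift X) :
    ConditionL X ↔ ∀ x ∈ X, EventuallyPeriodic x → {x} ∉ BA X := by
  obtain ⟨F, hFne, hXF⟩ := hX
  constructor
  · intro hL x hx hep hBA
    obtain ⟨M, Q, hI⟩ := inv_BA hXF hx hBA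
    obtain ⟨m, hMm, z, hHyp, hne⟩ := exists_pt hXF hL hx hep M Q
    exact hne ((hI m hMm z hHyp).mp rfl)
  · intro hRHS P hP γ hγlang hγ hmem
    by_contra hno
    push_neg at hno
    have hsingle : X ∩ ⋂ α ∈ P, follower X α = {per γ hγ} :=
      Set.eq_singleton_iff_unique_mem.mpr ⟨hmem, fun z hz => hno z hz⟩
    have hnil : ([] : List A) ∈ language X := ⟨per γ hγ, hmem.1, rfl⟩
    have hBA := FP_mem_BA X hnil P hP
    rw [hsingle] at hBA
    exact hRHS (per γ hγ) hmem.1 ⟨[], γ, hγ, (cat_nil _).symm⟩ hBA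


end SubshiftPaper
end
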